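/- For any function F : F_{p^n} -> F_{p^m}, any c in F_{p^m}, and any a_1,...,a_n in F_{p^n}, the following inversion identity holds: F(x + a_1 + ... + a_n) = sum over i from 0 to n, sum over all strictly increasing index sequences 1 <= j_1 < ... < j_i <= n, of c^{n-i} * _cD^{(i)}_{a_{j_1},...,a_{j_i}}F(x). -/

import Mathlib

/-- The multiplicative `c`-derivative of `F` in direction `a`. -/
def cDeriv {K L : Type*} [Add K] [Ring L] (c : L) (a : K) (F : K → L) : K → L :=
  fun x => F (x + a) - c * F x

/-- The iterated (higher order) `c`-derivative of `F` in directions `as = [a₁, …, aₜ]`,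
differentiating first in direction `a₁`, then `a₂`, etc. -/
def cDerivIter {K L : Type*} [Add K] [Ring L] (c : L) (as : List K) (F : K → L) : K → L :=
  as.foldl (fun G a => cDeriv c a G) F

lemma cDerivIter_cons {K L : Type*} [Add K] [Ring L] (c : L) (b : K) (l : List K) (F : K → L) :
    cDerivIter c (b :: l) F = cDerivIter c l (cDeriv c b F) := rfl

lemma my_sort_map {α β : Type*} [LinearOrder α] [LinearOrder β] (f : α ↪o β) (s : Finset α) :
    (s.map f.toEmbedding).sort (· ≤ ·) = (s.sort (· ≤ ·)).map f := by
  have hperm : List.Perm ((s.map f.toEmbedding).sort (· ≤ ·)) ((s.sort (· ≤ ·)).map f) := by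
    rw [← Multiset.coe_eq_coe]
    have h1 : ((s.map f.toEmbedding).sort (· ≤ ·) : Multiset β) = (s.map f.toEmbedding).val :=
      Finset.sort_eq _ _
    have h2 : (s.sort (· ≤ ·) : Multiset α) = s.val := Finset.sort_eq _ _
    rw [h1, Finset.map_val, ← Multiset.map_coe, h2]
    rfl
  exact hperm.eq_of_pairwise' (Finset.pairwise_sort _ _)
    (List.Pairwise.map f (fun a b h => f.le_iff_le.mpr h) (Finset.pairwise_sort _ _))

lemma my_sum_powerset_map {α β M : Type*} [AddCommMonoid M] (f : α ↪ β) (s : Finset α)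
    (g : Finset β → M) :
    ∑ J ∈ (s.map f).powerset, g J = ∑ I ∈ s.powerset, g (I.map f) := by
  have h : (s.map f).powerset = s.powerset.map ⟨fun I => I.map f, fun I J h => by
      simpa using Finset.map_injective f h⟩ := by
    ext J
    simp only [Finset.mem_powerset, Finset.mem_map, Function.Embedding.coeFn_mk,
      Finset.subset_map_iff]
    constructor
    · rintro ⟨u, hu, rfl⟩; exact ⟨u, hu, rfl⟩
    · rintro ⟨u, hu, rfl⟩; exact ⟨u, hu, rfl⟩
  rw [h, Finset.sum_map]
  rfl

lemma key_lemma {K L : Type*} [AddCommMonoid K] [Ring L] (c : L) :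
    ∀ (t : ℕ) (a : Fin t → K) (F : K → L) (x : K),
    F (x + ∑ i, a i) = ∑ I : Finset (Fin t), c ^ (t - I.card)
        * cDerivIter c ((I.sort (· ≤ ·)).map a) F x := by
  intro t
  induction t with
  | zero =>
      intro a F x
      simp [cDerivIter, show (default : Finset (Fin 0)) = ∅ from rfl]
  | succ t IH =>
      intro a F x
      have hcard : ∀ I : Finset (Fin t), I.card ≤ t := fun I => by
        simpa using Finset.card_le_univ I
      -- LHS
      have hsum : x + ∑ i, a i = (x + ∑ i : Fin t, a i.succ) + a 0 := by
        rw [Fin.sum_univ_succ, add_comm (a 0), ← add_assoc]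
      have hF : F ((x + ∑ i : Fin t, a i.succ) + a 0)
          = cDeriv c (a 0) F (x + ∑ i : Fin t, a i.succ)
            + c * F (x + ∑ i : Fin t, a i.succ) := by
        simp [cDeriv]
      rw [hsum, hF, IH (fun i => a i.succ) (cDeriv c (a 0) F) x, IH (fun i => a i.succ) F x]
      -- RHS
      have hemb : (Fin.succOrderEmb t).toEmbedding = Fin.succEmb t := rfl
      have h0 : (0 : Fin (t + 1)) ∉ (Finset.univ.map (Fin.succEmb t)) := by
        simp [Fin.succEmb]
      have huniv : (Finset.univ : Finset (Fin (t + 1)))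
          = insert 0 (Finset.univ.map (Fin.succEmb t)) := by
        rw [Fin.univ_succ, Finset.cons_eq_insert]
        rfl
      conv_rhs =>
        rw [← Finset.powerset_univ, huniv]
      rw [Finset.sum_powerset_insert h0, my_sum_powerset_map, my_sum_powerset_map,
        Finset.powerset_univ, Finset.mul_sum, ← Finset.sum_add_distrib,
        ← Finset.sum_add_distrib]
      apply Finset.sum_congr rfl
      intro I _
      have hsort : ((I.map (Fin.succEmb t)).sort (· ≤ ·)) = (I.sort (· ≤ ·)).map Fin.succ := by
        rw [← hemb, my_sort_map]
        rfl
      have h0I : (0 : Fin (t + 1)) ∉ I.map (Fin.succEmb t) := fun h => by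
        obtain ⟨i, _, hi⟩ := Finset.mem_map.mp h
        exact Fin.succ_ne_zero i hi
      have hsort2 : ((insert (0 : Fin (t + 1)) (I.map (Fin.succEmb t))).sort (· ≤ ·))
          = 0 :: (I.sort (· ≤ ·)).map Fin.succ := by
        rw [Finset.sort_insert (· ≤ ·) (fun b _ => Fin.zero_le b) h0I, hsort]
      rw [hsort, hsort2, Finset.card_insert_of_notMem h0I, Finset.card_map]
      simp only [List.map_cons, List.map_map]
      have hc1 : t + 1 - I.card = (t - I.card) + 1 := by have := hcard I; omega
      have hc2 : t + 1 - (I.card + 1) = t - I.card := by omega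
      rw [hc1, hc2, pow_succ']
      have : (a 0 :: List.map (a ∘ Fin.succ) (I.sort (· ≤ ·))) =
          (a 0 :: (I.sort (· ≤ ·)).map (fun i => a i.succ)) := rfl
      rw [this, cDerivIter_cons]
      have hmap : List.map (a ∘ Fin.succ) (I.sort (· ≤ ·))
          = (I.sort (· ≤ ·)).map (fun i => a i.succ) := rfl
      rw [hmap, add_comm, mul_assoc]

theorem stmt5 (p N m : ℕ) (hp : p.Prime) (hN : 0 < N) (hm : 0 < m)
    (K L : Type*) [Field K] [Fintype K] [Field L] [Fintype L]
    (hK : Fintype.card K = p ^ N) (hL : Fintype.card L = p ^ m)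
    (F : K → L) (c : L) (t : ℕ) (a : Fin t → K) :
    ∀ x : K, F (x + ∑ i, a i)
      = ∑ I : Finset (Fin t), c ^ (t - I.card)
          * cDerivIter c ((I.sort (· ≤ ·)).map a) F x := by
  intro x
  exact key_lemma c t a F x
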